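/- Let G be a finite simple graph with vertex set V, edge set E with |E| ≥ 1, maximum degree Δ, and matching number ν (the greatest size of a matching of G). Let r ≥ 1 be a natural number. Suppose μ : V → ℝ is a nonnegative vertex weighting satisfying μ(u) + μ(v) ≥ 2 − 2^{1−r} for every edge {u,v} of G, and suppose ∑_{v ∈ V} μ(v) > 0. Then (∑_{v ∈ V} μ(v))^{−1} ≤ min(Δ/|E|, 1/ν) · (2 − 2^{1−r})^{−1}. -/
import Mathlib

open Finset

/-- **Combinatorial core of the upper bound on the PIR capacity of `G^(r)`.**
If `G` has at least one edge, maximum degree `Δ`, matching number `ν`, and `μ` is a nonnegative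
vertex weighting with `μ u + μ v ≥ 2 - 2^(1-r)` on every edge and positive total sum, then
`(∑ v, μ v)⁻¹ ≤ min (Δ/|E|) (1/ν) * (2 - 2^(1-r))⁻¹`. -/
theorem inv_sum_le_min_maxDegree_matching
    {V : Type*} [Fintype V] [DecidableEq V] (G : SimpleGraph V) [DecidableRel G.Adj]
    (hE : 1 ≤ G.edgeFinset.card)
    (ν : ℕ)
    (hν₁ : ∃ M : Finset (Sym2 V), M ⊆ G.edgeFinset ∧
      (∀ e ∈ M, ∀ f ∈ M, e ≠ f → ∀ v, v ∈ e → v ∉ f) ∧ M.card = ν)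
    (hν₂ : ∀ M : Finset (Sym2 V), M ⊆ G.edgeFinset →
      (∀ e ∈ M, ∀ f ∈ M, e ≠ f → ∀ v, v ∈ e → v ∉ f) → M.card ≤ ν)
    (r : ℕ) (hr : 1 ≤ r)
    (μ : V → ℝ) (hμ0 : ∀ v, 0 ≤ μ v)
    (hμ : ∀ u v, G.Adj u v → 2 - (2 : ℝ) ^ (1 - (r : ℤ)) ≤ μ u + μ v)
    (hsum : 0 < ∑ v, μ v) :
    (∑ v, μ v)⁻¹ ≤
      min ((G.maxDegree : ℝ) / (G.edgeFinset.card : ℝ)) (1 / (ν : ℝ)) *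
        (2 - (2 : ℝ) ^ (1 - (r : ℤ)))⁻¹ := by
  classical
  set c : ℝ := 2 - (2 : ℝ) ^ (1 - (r : ℤ)) with hc
  set S : ℝ := ∑ v, μ v with hS
  -- c ≥ 1 > 0
  have hc1 : (1 : ℝ) ≤ c := by
    have h2 : (2 : ℝ) ^ (1 - (r : ℤ)) ≤ 1 :=
      zpow_le_one_of_nonpos₀ (by norm_num) (by omega)
    simp only [hc]; linarith
  have hcpos : (0 : ℝ) < c := lt_of_lt_of_le one_pos hc1
  -- endpoint finset of an edge
  set F : Sym2 V → Finset V := fun e => Finset.univ.filter (· ∈ e) with hF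
  have hedge : ∀ e ∈ G.edgeFinset, c ≤ ∑ v ∈ F e, μ v := by
    intro e he
    induction e using Sym2.ind with
    | _ u v =>
      rw [SimpleGraph.mem_edgeFinset, SimpleGraph.mem_edgeSet] at he
      have hne : u ≠ v := he.ne
      have hFuv : F s(u, v) = {u, v} := by
        ext w; simp [hF, Sym2.mem_iff]
      rw [hFuv, Finset.sum_pair hne]
      exact hμ u v he
  -- Bound A : c * ν ≤ S
  obtain ⟨M, hM, hMd, hMcard⟩ := hν₁
  have hA : c * (ν : ℝ) ≤ S := by
    have h1 : (M.card : ℝ) * c ≤ ∑ e ∈ M, ∑ v ∈ F e, μ v := by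
      have := Finset.card_nsmul_le_sum M (fun e => ∑ v ∈ F e, μ v) c
        (fun e he => hedge e (hM he))
      simpa [nsmul_eq_mul] using this
    have hdisj : ∀ e ∈ M, ∀ f ∈ M, e ≠ f → Disjoint (F e) (F f) := by
      intro e he f hf hef
      rw [Finset.disjoint_left]
      intro a ha haf
      simp only [hF, Finset.mem_filter] at ha haf
      exact hMd e he f hf hef a ha.2 haf.2
    have h2 : ∑ e ∈ M, ∑ v ∈ F e, μ v = ∑ v ∈ M.biUnion F, μ v :=
      (Finset.sum_biUnion (fun e he f hf hef => hdisj e he f hf hef)).symm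
    have h3 : ∑ v ∈ M.biUnion F, μ v ≤ S :=
      Finset.sum_le_sum_of_subset_of_nonneg (Finset.subset_univ _)
        (fun v _ _ => hμ0 v)
    calc c * (ν : ℝ) = (M.card : ℝ) * c := by rw [hMcard, mul_comm]
      _ ≤ ∑ e ∈ M, ∑ v ∈ F e, μ v := h1
      _ = ∑ v ∈ M.biUnion F, μ v := h2
      _ ≤ S := h3
  -- Bound B : c * |E| ≤ Δ * S
  have hB : c * (G.edgeFinset.card : ℝ) ≤ (G.maxDegree : ℝ) * S := by
    have h1 : (G.edgeFinset.card : ℝ) * c ≤ ∑ e ∈ G.edgeFinset, ∑ v ∈ F e, μ v := by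
      have := Finset.card_nsmul_le_sum G.edgeFinset (fun e => ∑ v ∈ F e, μ v) c hedge
      simpa [nsmul_eq_mul] using this
    have h2 : ∑ e ∈ G.edgeFinset, ∑ v ∈ F e, μ v = ∑ v, (G.degree v : ℝ) * μ v := by
      calc ∑ e ∈ G.edgeFinset, ∑ v ∈ F e, μ v
          = ∑ e ∈ G.edgeFinset, ∑ v : V, (if v ∈ e then μ v else 0) := by
            refine Finset.sum_congr rfl fun e _ => ?_
            rw [Finset.sum_filter]
        _ = ∑ v : V, ∑ e ∈ G.edgeFinset, (if v ∈ e then μ v else 0) :=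
            Finset.sum_comm
        _ = ∑ v, (G.degree v : ℝ) * μ v := by
            refine Finset.sum_congr rfl fun v _ => ?_
            rw [← Finset.sum_filter, ← SimpleGraph.incidenceFinset_eq_filter,
              Finset.sum_const, SimpleGraph.card_incidenceFinset_eq_degree, nsmul_eq_mul]
    have h3 : ∑ v, (G.degree v : ℝ) * μ v ≤ (G.maxDegree : ℝ) * S := by
      rw [hS, Finset.mul_sum]
      refine Finset.sum_le_sum fun v _ => ?_
      exact mul_le_mul_of_nonneg_right (by exact_mod_cast G.degree_le_maxDegree v) (hμ0 v)
    calc c * (G.edgeFinset.card : ℝ) = (G.edgeFinset.card : ℝ) * c := mul_comm _ _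
      _ ≤ ∑ e ∈ G.edgeFinset, ∑ v ∈ F e, μ v := h1
      _ = ∑ v, (G.degree v : ℝ) * μ v := h2
      _ ≤ (G.maxDegree : ℝ) * S := h3
  -- ν ≥ 1
  have hν1 : 1 ≤ ν := by
    obtain ⟨e, he⟩ := Finset.card_pos.mp hE
    have := hν₂ {e} (by simpa using he) (by simp)
    simpa using this
  have hEpos : (0 : ℝ) < (G.edgeFinset.card : ℝ) := by exact_mod_cast hE
  have hνpos : (0 : ℝ) < (ν : ℝ) := by exact_mod_cast hν1
  rw [min_mul_of_nonneg _ _ (inv_nonneg.mpr hcpos.le)]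
  apply le_min
  · have key : S⁻¹ ≤ (G.maxDegree : ℝ) / ((G.edgeFinset.card : ℝ) * c) := by
      rw [inv_eq_one_div, div_le_div_iff₀ hsum (by positivity)]
      nlinarith [hB]
    calc S⁻¹ ≤ (G.maxDegree : ℝ) / ((G.edgeFinset.card : ℝ) * c) := key
      _ = (G.maxDegree : ℝ) / (G.edgeFinset.card : ℝ) * c⁻¹ := by
          rw [← div_div, div_eq_mul_inv]
  · have key : S⁻¹ ≤ (c * (ν : ℝ))⁻¹ := by
      apply inv_anti₀ (by positivity) hA
    calc S⁻¹ ≤ (c * (ν : ℝ))⁻¹ := key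
      _ = 1 / (ν : ℝ) * c⁻¹ := by
          rw [mul_inv]
          ring
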